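/- Let T' be a tree with diameter at least 3 satisfying γ_{t,coi}(T') = |V(T')| - β(T'), and let v be a vertex of T' belonging to some minimum total co-independent dominating set of T'. Let T be obtained from T' by adding a path u₁u₂ (two new vertices with an edge between them) and the edge u₁v. Then γ_{t,coi}(T) = |V(T)| - β(T). -/

import Mathlib

open scoped Classical

/-- A set `D` is a total co-independent dominating set of `G`:
it is a total dominating set and its complement is a nonempty independent set. -/
def TotalCoIndep {V : Type*} [Fintype V] (G : SimpleGraph V) (D : Finset V) : Prop :=
  (∀ v : V, ∃ u ∈ D, G.Adj v u) ∧
  (Dᶜ : Finset V).Nonempty ∧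
  ∀ u ∈ (Dᶜ : Finset V), ∀ w ∈ (Dᶜ : Finset V), ¬ G.Adj u w

/-- The total co-independent domination number. -/
noncomputable def gammaTcoi {V : Type*} [Fintype V] (G : SimpleGraph V) : ℕ :=
  sInf {k | ∃ D : Finset V, TotalCoIndep G D ∧ D.card = k}

/-- A finite set of vertices is independent. -/
def IsIndepF {V : Type*} (G : SimpleGraph V) (B : Finset V) : Prop :=
  ∀ u ∈ B, ∀ w ∈ B, ¬ G.Adj u w

/-- The independence number. -/
noncomputable def indepNum {V : Type*} [Fintype V] (G : SimpleGraph V) : ℕ :=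
  sSup {k | ∃ B : Finset V, IsIndepF G B ∧ B.card = k}

/-- A leaf: a vertex with exactly one neighbor (degree one). -/
def IsLeaf {V : Type*} (G : SimpleGraph V) (v : V) : Prop :=
  ∃! u, G.Adj v u

/-- The set of leaves. -/
noncomputable def leaves {V : Type*} [Fintype V] (G : SimpleGraph V) : Finset V :=
  Finset.univ.filter (fun v => IsLeaf G v)

/-- A support vertex: a non-leaf adjacent to a leaf. -/
def IsSupport {V : Type*} (G : SimpleGraph V) (v : V) : Prop :=
  ¬ IsLeaf G v ∧ ∃ u, G.Adj v u ∧ IsLeaf G u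

/-- A semi-support vertex: a non-leaf, non-support vertex adjacent to a support vertex. -/
def IsSemiSupport {V : Type*} (G : SimpleGraph V) (v : V) : Prop :=
  ¬ IsLeaf G v ∧ ¬ IsSupport G v ∧ ∃ u, G.Adj v u ∧ IsSupport G u

/-- An isolated support vertex: a support vertex with no support vertex as neighbor. -/
def IsIsolatedSupport {V : Type*} (G : SimpleGraph V) (v : V) : Prop :=
  IsSupport G v ∧ ∀ u, G.Adj v u → ¬ IsSupport G u

/-- The set of cardinalities of independent sets is bounded above. -/
lemma indep_bddAbove {V : Type*} [Fintype V] (G : SimpleGraph V) :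
    BddAbove {k | ∃ B : Finset V, IsIndepF G B ∧ B.card = k} := by
  refine ⟨Fintype.card V, ?_⟩
  rintro k ⟨B, -, rfl⟩
  exact B.card_le_univ

/-- Any independent set has cardinality at most the independence number. -/
lemma indep_card_le_indepNum {V : Type*} [Fintype V] (G : SimpleGraph V) (B : Finset V)
    (h : IsIndepF G B) : B.card ≤ indepNum G :=
  le_csSup (indep_bddAbove G) ⟨B, h, rfl⟩

/-- Operation O₂: attaching a path `P₂` to a vertex of some minimum total co-independent
dominating set preserves `γ_{t,coi} = n - β`. -/
theorem stmt9 {V' : Type*} [Fintype V'] (T' : SimpleGraph V') (hT' : T'.IsTree)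
    (hdiam : ∃ x y : V', 3 ≤ T'.dist x y)
    (hval : gammaTcoi T' = Fintype.card V' - indepNum T')
    (v : V') (hv : ∃ D : Finset V', TotalCoIndep T' D ∧ D.card = gammaTcoi T' ∧ v ∈ D)
    (T : SimpleGraph (V' ⊕ Fin 2))
    (hT : ∀ x y : V' ⊕ Fin 2, T.Adj x y ↔
      (∃ a b : V', x = Sum.inl a ∧ y = Sum.inl b ∧ T'.Adj a b) ∨
      (x = Sum.inl v ∧ y = Sum.inr 0) ∨ (x = Sum.inr 0 ∧ y = Sum.inl v) ∨
      (x = Sum.inr 0 ∧ y = Sum.inr 1) ∨ (x = Sum.inr 1 ∧ y = Sum.inr 0)) :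
    gammaTcoi T = Fintype.card (V' ⊕ Fin 2) - indepNum T := by
  letI : DecidableEq V' := fun a b => Classical.propDecidable _
  letI : DecidableEq (V' ⊕ Fin 2) := fun a b => Classical.propDecidable _
  obtain ⟨D, hD, hDcard, hvD⟩ := hv
  set n' := Fintype.card V' with hn'
  set β' := indepNum T' with hβ'
  -- card of the big type
  have hcardT : Fintype.card (V' ⊕ Fin 2) = n' + 2 := by
    simp [Fintype.card_sum, hn']
  -- β' ≤ n'
  have hβle : β' ≤ n' := by
    refine csSup_le ⟨0, ∅, ?_, by simp⟩ ?_
    · intro u hu; simp at hu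
    · rintro k ⟨B, -, rfl⟩; exact B.card_le_univ
  -- the candidate set D ∪ {inr 0}
  set Dp : Finset (V' ⊕ Fin 2) := insert (Sum.inr 0) (D.image Sum.inl) with hDp
  have hinr0 : (Sum.inr 0 : V' ⊕ Fin 2) ∈ Dp := Finset.mem_insert_self _ _
  have hmemDp : ∀ a : V', Sum.inl a ∈ Dp ↔ a ∈ D := by
    intro a
    simp [hDp]
  have hinr1 : (Sum.inr 1 : V' ⊕ Fin 2) ∉ Dp := by
    simp [hDp, Fin.ext_iff]
  have hDpTCI : TotalCoIndep T Dp := by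
    refine ⟨?_, ?_, ?_⟩
    · rintro (a | i)
      · obtain ⟨u, hu, hadj⟩ := hD.1 a
        exact ⟨Sum.inl u, (hmemDp u).2 hu, (hT _ _).2 (Or.inl ⟨a, u, rfl, rfl, hadj⟩)⟩
      · fin_cases i
        · exact ⟨Sum.inl v, (hmemDp v).2 hvD, (hT _ _).2 (Or.inr (Or.inr (Or.inl ⟨rfl, rfl⟩)))⟩
        · exact ⟨Sum.inr 0, hinr0, (hT _ _).2 (Or.inr (Or.inr (Or.inr (Or.inr ⟨rfl, rfl⟩))))⟩
    · exact ⟨Sum.inr 1, Finset.mem_compl.2 hinr1⟩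
    · intro x hx y hy hadj
      rw [Finset.mem_compl] at hx hy
      rcases (hT _ _).1 hadj with ⟨a, b, rfl, rfl, hab⟩ | ⟨rfl, rfl⟩ | ⟨rfl, rfl⟩ |
        ⟨rfl, rfl⟩ | ⟨rfl, rfl⟩
      · have ha : a ∈ Dᶜ := Finset.mem_compl.2 (fun h => hx ((hmemDp a).2 h))
        have hb : b ∈ Dᶜ := Finset.mem_compl.2 (fun h => hy ((hmemDp b).2 h))
        exact hD.2.2 a ha b hb hab
      · exact hx ((hmemDp v).2 hvD)
      · exact hx hinr0
      · exact hx hinr0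
      · exact hy hinr0
  have hDpcard : Dp.card = D.card + 1 := by
    rw [hDp, Finset.card_insert_of_notMem (by simp), Finset.card_image_of_injective _
      Sum.inl_injective]
  -- upper bound: γ(T) ≤ D.card + 1
  have hupper : gammaTcoi T ≤ D.card + 1 :=
    Nat.sInf_le ⟨Dp, hDpTCI, hDpcard⟩
  -- γ(T) is attained
  have hne : {k | ∃ E : Finset (V' ⊕ Fin 2), TotalCoIndep T E ∧ E.card = k}.Nonempty :=
    ⟨Dp.card, Dp, hDpTCI, rfl⟩
  obtain ⟨D₀, hD₀, hD₀card⟩ := Nat.sInf_mem hne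
  -- lower bound ingredients
  have hcompl : D₀ᶜ.card ≤ indepNum T :=
    indep_card_le_indepNum T D₀ᶜ (fun u hu w hw => hD₀.2.2 u hu w hw)
  have hsum : D₀.card + D₀ᶜ.card = n' + 2 := by
    rw [Finset.card_add_card_compl]
    exact hcardT
  -- independence number of T: lower bound β' + 1
  have hne2 : ({k | ∃ B : Finset V', IsIndepF T' B ∧ B.card = k}).Nonempty :=
    ⟨0, ⟨∅, fun u hu => by simp at hu, by simp⟩⟩
  have hβ'mem : β' ∈ {k | ∃ B : Finset V', IsIndepF T' B ∧ B.card = k} :=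
    Nat.sSup_mem hne2 (indep_bddAbove T')
  obtain ⟨B', hB', hB'card⟩ := hβ'mem
  have hβTlow : β' + 1 ≤ indepNum T := by
    have hnotmem : (Sum.inr 1 : V' ⊕ Fin 2) ∉ B'.image (Sum.inl : V' → V' ⊕ Fin 2) := by simp
    have : IsIndepF T (insert (Sum.inr 1) (B'.image (Sum.inl : V' → V' ⊕ Fin 2))) := by
      intro x hx y hy hadj
      rcases (hT _ _).1 hadj with ⟨a, b, rfl, rfl, hab⟩ | ⟨rfl, rfl⟩ | ⟨rfl, rfl⟩ |
        ⟨rfl, rfl⟩ | ⟨rfl, rfl⟩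
      · have ha : a ∈ B' := by
          rcases Finset.mem_insert.1 hx with h | h
          · exact absurd h (by simp)
          · simpa using h
        have hb : b ∈ B' := by
          rcases Finset.mem_insert.1 hy with h | h
          · exact absurd h (by simp)
          · simpa using h
        exact hB' a ha b hb hab
      · rcases Finset.mem_insert.1 hy with h | h
        · exact absurd h (by simp [Fin.ext_iff])
        · simp at h
      · rcases Finset.mem_insert.1 hx with h | h
        · exact absurd h (by simp [Fin.ext_iff])
        · simp at h
      · rcases Finset.mem_insert.1 hx with h | h
        · exact absurd h (by simp [Fin.ext_iff])
        · simp at h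
      · rcases Finset.mem_insert.1 hy with h | h
        · exact absurd h (by simp [Fin.ext_iff])
        · simp at h
    have hcard : (insert (Sum.inr 1 : V' ⊕ Fin 2) (B'.image (Sum.inl : V' → V' ⊕ Fin 2))).card = β' + 1 := by
      rw [Finset.card_insert_of_notMem hnotmem,
        Finset.card_image_of_injective _ Sum.inl_injective, hB'card]
    calc β' + 1 = (insert (Sum.inr 1 : V' ⊕ Fin 2) (B'.image (Sum.inl : V' → V' ⊕ Fin 2))).card := hcard.symm
      _ ≤ indepNum T := indep_card_le_indepNum T _ this
  -- independence number of T: upper bound β' + 1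
  have hβThigh : indepNum T ≤ β' + 1 := by
    refine csSup_le ⟨0, ∅, fun u hu => by simp at hu, by simp⟩ ?_
    rintro k ⟨B, hB, rfl⟩
    set BL : Finset V' := Finset.univ.filter (fun a => Sum.inl a ∈ B) with hBL
    have hBLindep : IsIndepF T' BL := by
      intro a ha b hb hab
      rw [hBL, Finset.mem_filter] at ha hb
      exact hB _ ha.2 _ hb.2 ((hT _ _).2 (Or.inl ⟨a, b, rfl, rfl, hab⟩))
    have hBLle : BL.card ≤ β' := indep_card_le_indepNum T' BL hBLindep
    -- split B into left and right parts
    have hsplit : (B.filter (fun x => x.isLeft)).card +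
        (B.filter (fun x => ¬ x.isLeft)).card = B.card :=
      Finset.card_filter_add_card_filter_not _
    have hL : (B.filter (fun x => x.isLeft)) = BL.image Sum.inl := by
      ext x
      cases x with
      | inl a => simp [hBL]
      | inr i => simp
    have hLcard : (B.filter (fun x => x.isLeft)).card = BL.card := by
      rw [hL, Finset.card_image_of_injective _ Sum.inl_injective]
    have hRcard : (B.filter (fun x => ¬ x.isLeft)).card ≤ 1 := by
      have hnotboth : ¬ ((Sum.inr 0 : V' ⊕ Fin 2) ∈ B ∧ (Sum.inr 1 : V' ⊕ Fin 2) ∈ B) := by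
        rintro ⟨h0, h1⟩
        exact hB _ h0 _ h1 ((hT _ _).2 (Or.inr (Or.inr (Or.inr (Or.inl ⟨rfl, rfl⟩)))))
      by_cases h0 : (Sum.inr 0 : V' ⊕ Fin 2) ∈ B
      · have hsub : (B.filter (fun x => ¬ x.isLeft)) ⊆ {Sum.inr 0} := by
          intro x hx
          rw [Finset.mem_filter] at hx
          cases x with
          | inl a => simp at hx
          | inr i =>
            fin_cases i
            · simp
            · exact absurd ⟨h0, hx.1⟩ hnotboth
        calc (B.filter (fun x => ¬ x.isLeft)).card ≤ ({Sum.inr 0} : Finset (V' ⊕ Fin 2)).card :=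
              Finset.card_le_card hsub
          _ = 1 := Finset.card_singleton _
      · have hsub : (B.filter (fun x => ¬ x.isLeft)) ⊆ {Sum.inr 1} := by
          intro x hx
          rw [Finset.mem_filter] at hx
          cases x with
          | inl a => simp at hx
          | inr i =>
            fin_cases i
            · exact absurd hx.1 h0
            · simp
        calc (B.filter (fun x => ¬ x.isLeft)).card ≤ ({Sum.inr 1} : Finset (V' ⊕ Fin 2)).card :=
              Finset.card_le_card hsub
          _ = 1 := Finset.card_singleton _
    omega
  -- D.card = n' - β'
  have hDval : D.card = n' - β' := by rw [hDcard, hval]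
  have h1 : gammaTcoi T = D₀.card := hD₀card.symm
  rw [hcardT]
  omega
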